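/- Let N ≥ 1 and let (q_{ij})_{1≤i,j≤N} be a conservative Q-matrix, i.e. q_{ij} ≥ 0 for i ≠ j and q_{ii} = −∑_{j≠i} q_{ij}. Then for all real numbers f_1,…,f_N and all π_1,…,π_N ∈ ℝ one has the identity ∑_{i=1}^N π_i ∑_{j=1}^N q_{ij} · min(f_j⁺,1) · (f_i − min(f_i⁺,1)) = −∑_{i=1}^N π_i ∑_{j≠i} q_{ij} [ min(f_j⁺,1)·f_i⁻ + (1 − min(f_j⁺,1))·(f_i−1)⁺ ], where f⁺ = max(f,0), f⁻ = max(−f,0) and (f−1)⁺ = max(f−1,0). In particular, if π_1,…,π_N ≥ 0 then ∑_{i=1}^N π_i ∑_{j=1}^N q_{ij} · min(f_j⁺,1) · (f_i − min(f_i⁺,1)) ≤ 0. -/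

import Mathlib

private lemma qmx_key (c a : ℝ) :
    (c - min (max a 0) 1) * (a - min (max a 0) 1)
      = -(c * max (-a) 0 + (1 - c) * max (a - 1) 0) := by
  rcases le_total a 0 with h | h
  · have h1 : max a 0 = 0 := max_eq_right h
    have h2 : max (-a) 0 = -a := max_eq_left (by linarith)
    have h3 : max (a - 1) 0 = 0 := max_eq_right (by linarith)
    rw [h1, h2, h3]
    norm_num
  · rcases le_total a 1 with h' | h'
    · have h1 : max a 0 = a := max_eq_left h
      have h2 : max (-a) 0 = 0 := max_eq_right (by linarith)
      have h3 : max (a - 1) 0 = 0 := max_eq_right (by linarith)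
      have h4 : min a 1 = a := min_eq_left h'
      rw [h1, h4, h2, h3]; ring
    · have h1 : max a 0 = a := max_eq_left (by linarith)
      have h2 : max (-a) 0 = 0 := max_eq_right (by linarith)
      have h3 : max (a - 1) 0 = a - 1 := max_eq_left (by linarith)
      have h4 : min a 1 = 1 := min_eq_right h'
      rw [h1, h4, h2, h3]; ring

/-- For a conservative Q-matrix `q` (off-diagonal entries nonnegative,
`q i i = -∑_{j≠i} q i j`), the normal-contraction identity
`∑ i, π i * ∑ j, q i j * min (f j)⁺ 1 * (f i - min (f i)⁺ 1)
  = -∑ i, π i * ∑_{j≠i} q i j * (min (f j)⁺ 1 * (f i)⁻ + (1 - min (f j)⁺ 1) * (f i - 1)⁺)`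
holds, and consequently the left-hand side is nonpositive whenever all `π i ≥ 0`. -/
theorem conservative_Q_matrix_normal_contraction
    (N : ℕ) (hN : 1 ≤ N) (q : Fin N → Fin N → ℝ)
    (hq : ∀ i j, i ≠ j → 0 ≤ q i j)
    (hcons : ∀ i, q i i = -∑ j ∈ Finset.univ.erase i, q i j)
    (f π : Fin N → ℝ) :
    (∑ i, π i * ∑ j, q i j * min (max (f j) 0) 1 * (f i - min (max (f i) 0) 1)
      = -∑ i, π i * ∑ j ∈ Finset.univ.erase i,
          q i j * (min (max (f j) 0) 1 * max (-(f i)) 0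
                    + (1 - min (max (f j) 0) 1) * max (f i - 1) 0))
    ∧ ((∀ i, 0 ≤ π i) →
        ∑ i, π i * ∑ j, q i j * min (max (f j) 0) 1 * (f i - min (max (f i) 0) 1) ≤ 0) := by
  set m : Fin N → ℝ := fun i => min (max (f i) 0) 1 with hm
  have hm0 : ∀ i, 0 ≤ m i := fun i => le_min (le_max_right _ _) zero_le_one
  have hm1 : ∀ i, m i ≤ 1 := fun i => min_le_right _ _
  have inner : ∀ i, (∑ j, q i j * m j * (f i - m i))
      = -∑ j ∈ Finset.univ.erase i,
          q i j * (m j * max (-(f i)) 0 + (1 - m j) * max (f i - 1) 0) := by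
    intro i
    rw [← Finset.add_sum_erase _ _ (Finset.mem_univ i), hcons i]
    have this1 : ∀ j ∈ Finset.univ.erase i,
        q i j * ((m j - m i) * (f i - m i))
          = -(q i j * (m j * max (-(f i)) 0 + (1 - m j) * max (f i - 1) 0)) := by
      intro j _
      rw [qmx_key (m j) (f i)]; ring
    have hrhs : -∑ j ∈ Finset.univ.erase i,
          q i j * (m j * max (-(f i)) 0 + (1 - m j) * max (f i - 1) 0)
        = ∑ j ∈ Finset.univ.erase i, q i j * ((m j - m i) * (f i - m i)) := by
      rw [Finset.sum_congr rfl this1, Finset.sum_neg_distrib]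
    rw [hrhs, neg_mul, neg_mul, Finset.sum_mul, Finset.sum_mul, neg_add_eq_iff_eq_add,
      ← Finset.sum_add_distrib]
    exact Finset.sum_congr rfl fun j _ => by ring
  have heq : (∑ i, π i * ∑ j, q i j * m j * (f i - m i))
      = -∑ i, π i * ∑ j ∈ Finset.univ.erase i,
          q i j * (m j * max (-(f i)) 0 + (1 - m j) * max (f i - 1) 0) := by
    rw [← Finset.sum_neg_distrib]
    exact Finset.sum_congr rfl fun i _ => by rw [inner i]; ring
  refine ⟨heq, fun hπ => ?_⟩
  rw [heq, neg_nonpos]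
  refine Finset.sum_nonneg fun i _ => mul_nonneg (hπ i) (Finset.sum_nonneg fun j hj => ?_)
  refine mul_nonneg (hq i j (Ne.symm (Finset.ne_of_mem_erase hj))) (add_nonneg ?_ ?_)
  · exact mul_nonneg (hm0 j) (le_max_right _ _)
  · exact mul_nonneg (by linarith [hm1 j]) (le_max_right _ _)
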